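/- Let α ∈ (1/2, 1) be a constant. There is n₀ ∈ ℕ such that for all n ≥ n₀ and all reals ε with 2^{−(2α−1)n/2} ≤ ε ≤ 1/6: every deterministic non-adaptive SSSQ algorithm (g, T) with advantage at least 2/3 has query complexity Σ_{i=1}^d |T_i| ≥ n^{3/2} / (ε · (log₂ n)³ · (log₂(n/ε))²). -/

import Mathlib

open Finset

/-- Probability that the SSSQ oracle, on hidden set `A ⊆ [m]` and set queries
`T = (T_1, …, T_d)`, returns the response `v` (where `v i j` is only meaningful — and
forced to be `false` — when `j ∉ T i`; for `j ∈ T i` the bit is `0` if `j ∉ A`, and is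
`1` with probability `ρ` if `j ∈ A`, all bits independent). -/
noncomputable def sssqRespP {m d : ℕ} (T : Fin d → Finset (Fin m)) (ρ : ℝ)
    (A : Finset (Fin m)) (v : Fin d → Fin m → Bool) : ℝ :=
  ∏ i : Fin d, ∏ j : Fin m,
    if j ∈ T i then
      (if j ∈ A then (if v i j then ρ else 1 - ρ) else (if v i j then 0 else 1))
    else (if v i j then 0 else 1)

/-- Probability that the deterministic non-adaptive SSSQ algorithm `(g, T)` answers
"yes" (`true`) when the hidden set `A ⊆ [m]` is drawn by including each element of `[m]`
independently with probability `pr`, and each response bit for `j ∈ T i ∩ A` is `1`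
with probability `ρ`. -/
noncomputable def sssqYesP (m d : ℕ) (T : Fin d → Finset (Fin m)) (ρ pr : ℝ)
    (g : (Fin d → Fin m → Bool) → Bool) : ℝ :=
  ∑ A : Finset (Fin m), (pr ^ A.card * (1 - pr) ^ (m - A.card)) *
    ∑ v : Fin d → Fin m → Bool,
      (if g v then 1 else 0) * sssqRespP T ρ A v

namespace SSSQ

variable {m d : ℕ}

noncomputable def eW (T : Fin d → Finset (Fin m)) (ρ : ℝ) (j : Fin m) (u : Fin d → Bool) : ℝ :=
  ∏ i, if j ∈ T i then (if u i then ρ else 1 - ρ) else (if u i then 0 else 1)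

noncomputable def eZ (d : ℕ) (u : Fin d → Bool) : ℝ := ∏ i, if u i then (0:ℝ) else 1

noncomputable def eH (T : Fin d → Finset (Fin m)) (ρ p : ℝ) (j : Fin m) (u : Fin d → Bool) : ℝ :=
  p * eW T ρ j u + (1 - p) * eZ d u

lemma respP_eq (T : Fin d → Finset (Fin m)) (ρ : ℝ) (A : Finset (Fin m))
    (v : Fin d → Fin m → Bool) :
    sssqRespP T ρ A v = ∏ j, if j ∈ A then eW T ρ j (fun i => v i j) else eZ d (fun i => v i j) := by
  rw [sssqRespP, Finset.prod_comm]
  refine Finset.prod_congr rfl fun j _ => ?_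
  by_cases hA : j ∈ A
  · simp only [hA, if_true, eW]
  · simp only [hA, if_false, eZ]
    refine Finset.prod_congr rfl fun i _ => ?_
    by_cases h : j ∈ T i <;> simp [h]

lemma sum_prior_resp (T : Fin d → Finset (Fin m)) (ρ p : ℝ) (v : Fin d → Fin m → Bool) :
    ∑ A : Finset (Fin m), (p ^ A.card * (1 - p) ^ (m - A.card)) * sssqRespP T ρ A v
      = ∏ j, eH T ρ p j (fun i => v i j) := by
  have hprior : ∀ A : Finset (Fin m),
      p ^ A.card * (1 - p) ^ (m - A.card) = ∏ j, if j ∈ A then p else (1 - p) := by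
    intro A
    rw [Finset.prod_ite (fun _ => p) (fun _ => (1:ℝ) - p), Finset.prod_const, Finset.prod_const]
    congr 2
    · simp
    · rw [Finset.filter_not]
      simp [Finset.card_sdiff_of_subset (Finset.subset_univ _), Finset.filter_mem_eq_inter]
  calc ∑ A : Finset (Fin m), (p ^ A.card * (1 - p) ^ (m - A.card)) * sssqRespP T ρ A v
      = ∑ A : Finset (Fin m), ∏ j, (if j ∈ A then p * eW T ρ j (fun i => v i j)
          else (1 - p) * eZ d (fun i => v i j)) := by
        refine Finset.sum_congr rfl fun A _ => ?_
        rw [respP_eq, hprior, ← Finset.prod_mul_distrib]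
        refine Finset.prod_congr rfl fun j _ => ?_
        by_cases hA : j ∈ A <;> simp [hA]
    _ = ∏ j, eH T ρ p j (fun i => v i j) := by
        unfold eH
        rw [Finset.prod_add, ← Finset.powerset_univ]
        refine Finset.sum_congr rfl fun A hA => ?_
        rw [Finset.prod_ite (fun j => p * eW T ρ j (fun i => v i j))
          (fun j => (1 - p) * eZ d (fun i => v i j))]
        congr 1
        · exact Finset.prod_congr (by simp) fun _ _ => rfl
        · refine Finset.prod_congr ?_ fun _ _ => rfl
          rw [Finset.filter_not]
          simp [Finset.filter_mem_eq_inter]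

lemma yesP_eq (T : Fin d → Finset (Fin m)) (ρ p : ℝ) (g : (Fin d → Fin m → Bool) → Bool) :
    sssqYesP m d T ρ p g
      = ∑ v : Fin d → Fin m → Bool, (if g v then 1 else 0) * ∏ j, eH T ρ p j (fun i => v i j) := by
  rw [sssqYesP]
  simp_rw [Finset.mul_sum]
  rw [Finset.sum_comm]
  refine Finset.sum_congr rfl fun v _ => ?_
  rw [← sum_prior_resp T ρ p v, Finset.mul_sum]
  refine Finset.sum_congr rfl fun A _ => by ring


lemma sum_col (F : Fin m → (Fin d → Bool) → ℝ) :
    ∑ v : Fin d → Fin m → Bool, ∏ j, F j (fun i => v i j) = ∏ j, ∑ u : Fin d → Bool, F j u := by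
  rw [Finset.prod_univ_sum (fun _ : Fin m => (Finset.univ : Finset (Fin d → Bool))) F,
    Fintype.piFinset_univ]
  exact Fintype.sum_equiv (Equiv.piComm fun (_ : Fin d) (_ : Fin m) => Bool) _ _ fun v => rfl

lemma sum_pi_bool (c : Fin d → Bool → ℝ) :
    ∑ u : Fin d → Bool, ∏ i, c i (u i) = ∏ i, (c i true + c i false) := by
  rw [← Fintype.piFinset_univ, ← Finset.prod_univ_sum (fun _ => (Finset.univ : Finset Bool)) c]
  exact Finset.prod_congr rfl fun i _ => by simp

lemma sum_eW (T : Fin d → Finset (Fin m)) (ρ : ℝ) (j : Fin m) :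
    ∑ u : Fin d → Bool, eW T ρ j u = 1 := by
  refine (sum_pi_bool fun i b =>
    if j ∈ T i then (if b then ρ else 1 - ρ) else (if b then 0 else 1)).trans ?_
  rw [← Finset.prod_const_one (s := (Finset.univ : Finset (Fin d)))]
  exact Finset.prod_congr rfl fun i _ => by by_cases h : j ∈ T i <;> simp [h]

lemma sum_eZ : ∑ u : Fin d → Bool, eZ d u = 1 := by
  refine (sum_pi_bool fun i b => if b then (0:ℝ) else 1).trans ?_
  simp

lemma sum_eH (T : Fin d → Finset (Fin m)) (ρ p : ℝ) (j : Fin m) :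
    ∑ u : Fin d → Bool, eH T ρ p j u = 1 := by
  unfold eH
  rw [Finset.sum_add_distrib, ← Finset.mul_sum, ← Finset.mul_sum, sum_eW, sum_eZ]
  ring

lemma eW_nonneg (T : Fin d → Finset (Fin m)) {ρ : ℝ} (h0 : 0 ≤ ρ) (h1 : ρ ≤ 1) (j : Fin m)
    (u : Fin d → Bool) : 0 ≤ eW T ρ j u := by
  refine Finset.prod_nonneg fun i _ => ?_
  by_cases h : j ∈ T i <;> cases hu : u i <;> simp [h, hu] <;> linarith

lemma eZ_nonneg (u : Fin d → Bool) : 0 ≤ eZ d u := by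
  refine Finset.prod_nonneg fun i _ => ?_
  cases hu : u i <;> simp [hu]

lemma eH_nonneg (T : Fin d → Finset (Fin m)) {ρ p : ℝ} (h0 : 0 ≤ ρ) (h1 : ρ ≤ 1)
    (hp0 : 0 ≤ p) (hp1 : p ≤ 1) (j : Fin m) (u : Fin d → Bool) : 0 ≤ eH T ρ p j u := by
  have := eW_nonneg T h0 h1 j u
  have := eZ_nonneg (d := d) u
  unfold eH; nlinarith

lemma eH_eq_zero (T : Fin d → Finset (Fin m)) {ρ p : ℝ} (h0 : 0 ≤ ρ) (h1 : ρ ≤ 1)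
    (hp0 : 0 < p) (hp1 : p < 1) (j : Fin m) (u : Fin d → Bool)
    (h : eH T ρ p j u = 0) : eW T ρ j u = 0 ∧ eZ d u = 0 := by
  have hW := eW_nonneg T h0 h1 j u
  have hZ := eZ_nonneg (d := d) u
  unfold eH at h
  constructor <;> nlinarith

lemma eW_zero (T : Fin d → Finset (Fin m)) (ρ : ℝ) (j : Fin m) :
    eW T ρ j (fun _ => false) = (1 - ρ) ^ ((Finset.univ.filter fun i => j ∈ T i).card) := by
  unfold eW
  rw [Finset.prod_ite (fun _ => _) (fun _ => _)]
  simp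

lemma eZ_zero : eZ d (fun _ => false) = 1 := by simp [eZ]

lemma eZ_ne_zero {u : Fin d → Bool} (hu : u ≠ fun _ => false) : eZ d u = 0 := by
  have : ∃ i, u i = true := by
    by_contra h
    push_neg at h
    exact hu (funext fun i => by simpa using h i)
  obtain ⟨i, hi⟩ := this
  exact Finset.prod_eq_zero (Finset.mem_univ i) (by simp [hi])

lemma one_sub_pow_le (t : ℕ) {ρ : ℝ} (h0 : 0 ≤ ρ) (h1 : ρ ≤ 1) :
    1 - (1 - ρ) ^ t ≤ ρ * t := by
  have h := one_add_mul_le_pow (a := -ρ) (by linarith) t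
  have h' : 1 + (t : ℝ) * (-ρ) ≤ (1 - ρ) ^ t := by
    simpa [sub_eq_add_neg] using h
  nlinarith


lemma aux_z {δ q : ℝ} (hδ0 : 0 < δ) (hδ1 : δ ≤ 1/4) (hq0 : 0 ≤ q) (hq1 : q ≤ 1) :
    ((1/2)*q + 1/2)^2 / ((1/2+δ)*q + (1/2-δ)) ≤
      2*((1/2)*q + 1/2) - ((1/2+δ)*q + (1/2-δ)) + 4*δ^2*(1-q) := by
  have hD : 0 < (1/2+δ)*q + (1/2-δ) := by nlinarith
  rw [div_le_iff₀ hD]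
  nlinarith [mul_nonneg (mul_nonneg (sq_nonneg δ) (by linarith : (0:ℝ) ≤ 1-q))
    (by nlinarith : (0:ℝ) ≤ 4*((1/2+δ)*q + (1/2-δ)) - (1-q))]

lemma aux_ne {δ W : ℝ} (hδ0 : 0 < δ) (hW : 0 < W) :
    ((1/2)*W)^2 / ((1/2+δ)*W) ≤ 2*((1/2)*W) - (1/2+δ)*W + 2*δ^2*W := by
  have hD : 0 < (1/2+δ)*W := by nlinarith
  rw [div_le_iff₀ hD]
  nlinarith [mul_nonneg (sq_nonneg W) (le_of_lt (mul_pos (mul_pos hδ0 hδ0) hδ0))]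

set_option maxHeartbeats 1000000 in
lemma chi_le (T : Fin d → Finset (Fin m)) {ρ δ : ℝ} (hρ0 : 0 ≤ ρ) (hρ1 : ρ ≤ 1)
    (hδ0 : 0 < δ) (hδ1 : δ ≤ 1/4) (j : Fin m) :
    ∑ u : Fin d → Bool, (eH T ρ (1/2) j u) ^ 2 / eH T ρ (1/2 + δ) j u ≤
      1 + 6 * δ ^ 2 * (ρ * ((Finset.univ.filter fun i => j ∈ T i).card : ℝ)) := by
  classical
  set t : ℕ := (Finset.univ.filter fun i => j ∈ T i).card with ht
  have hq0 : (0:ℝ) ≤ (1-ρ)^t := pow_nonneg (by linarith) t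
  have hq1 : (1-ρ)^t ≤ 1 := pow_le_one₀ (by linarith) (by linarith)
  have hWz : eW T ρ j (fun _ => false) = (1-ρ)^t := eW_zero T ρ j
  have hh1z : eH T ρ (1/2) j (fun _ => false) = (1/2)*(1-ρ)^t + 1/2 := by
    rw [eH, hWz, eZ_zero]; ring
  have hh2z : eH T ρ (1/2+δ) j (fun _ => false) = (1/2+δ)*(1-ρ)^t + (1/2-δ) := by
    rw [eH, hWz, eZ_zero]; ring
  have hz_bound : eH T ρ (1/2) j (fun _ => false) ^ 2 / eH T ρ (1/2+δ) j (fun _ => false) ≤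
      (2 * eH T ρ (1/2) j (fun _ => false) - eH T ρ (1/2+δ) j (fun _ => false))
        + 4*δ^2*(1-(1-ρ)^t) := by
    rw [hh1z, hh2z]; exact aux_z hδ0 hδ1 hq0 hq1
  have hne_bound : ∀ u : Fin d → Bool, u ≠ (fun _ => false) →
      eH T ρ (1/2) j u ^ 2 / eH T ρ (1/2+δ) j u ≤
        (2 * eH T ρ (1/2) j u - eH T ρ (1/2+δ) j u) + 2*δ^2*eW T ρ j u := by
    intro u hu
    have hW := eW_nonneg T hρ0 hρ1 j u
    have hZ0 : eZ d u = 0 := eZ_ne_zero hu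
    have hh1 : eH T ρ (1/2) j u = (1/2) * eW T ρ j u := by rw [eH, hZ0]; ring
    have hh2 : eH T ρ (1/2+δ) j u = (1/2 + δ) * eW T ρ j u := by rw [eH, hZ0]; ring
    rw [hh1, hh2]
    rcases eq_or_lt_of_le hW with hW0 | hWpos
    · rw [← hW0]; norm_num
    · exact aux_ne hδ0 hWpos
  have hsplit := Finset.sum_erase_add Finset.univ
    (fun u => eH T ρ (1/2) j u ^ 2 / eH T ρ (1/2+δ) j u) (Finset.mem_univ (fun _ => false))
  have hsplitH := Finset.sum_erase_add Finset.univ (fun u => 2 * eH T ρ (1/2) j u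
    - eH T ρ (1/2 + δ) j u) (Finset.mem_univ (fun _ => false))
  have hsumH : ∑ u : Fin d → Bool, (2 * eH T ρ (1/2) j u - eH T ρ (1/2 + δ) j u) = 1 := by
    rw [Finset.sum_sub_distrib, ← Finset.mul_sum, sum_eH, sum_eH]; ring
  have hsplitW := Finset.sum_erase_add Finset.univ (eW T ρ j) (Finset.mem_univ (fun _ => false))
  rw [sum_eW] at hsplitW
  have herase : ∑ u ∈ Finset.univ.erase (fun _ => false),
        eH T ρ (1/2) j u ^ 2 / eH T ρ (1/2+δ) j u ≤
      ∑ u ∈ Finset.univ.erase (fun _ => false), ((2 * eH T ρ (1/2) j u - eH T ρ (1/2 + δ) j u)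
        + 2*δ^2* eW T ρ j u) :=
    Finset.sum_le_sum fun u hu => hne_bound u (Finset.ne_of_mem_erase hu)
  rw [Finset.sum_add_distrib, ← Finset.mul_sum] at herase
  have hbern : 1 - (1-ρ)^t ≤ ρ * t := one_sub_pow_le t hρ0 hρ1
  have hterase : ∑ u ∈ Finset.univ.erase (fun _ => false), eW T ρ j u = 1 - (1-ρ)^t := by
    rw [← hWz]; linarith
  rw [hterase] at herase
  rw [hsumH] at hsplitH
  have htot : ∑ u : Fin d → Bool, eH T ρ (1/2) j u ^ 2 / eH T ρ (1/2+δ) j u ≤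
      1 + 4*δ^2*(1-(1-ρ)^t) + 2*δ^2*(1-(1-ρ)^t) := by
    rw [← hsplit]
    linarith
  refine htot.trans ?_
  nlinarith [sq_nonneg δ, mul_le_mul_of_nonneg_left hbern (sq_nonneg δ)]


lemma adv_le {N : Type*} [Fintype N] (f1 f2 : N → ℝ) (g : N → Bool)
    (h1 : ∑ v, f1 v = 1) (h2 : ∑ v, f2 v = 1) :
    ∑ v, (if g v then (1:ℝ) else 0) * (f1 v - f2 v) ≤ (∑ v, |f1 v - f2 v|) / 2 := by
  have hpt : ∀ v, (if g v then (1:ℝ) else 0) * (f1 v - f2 v) ≤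
      (|f1 v - f2 v| + (f1 v - f2 v)) / 2 := by
    intro v
    by_cases hg : g v = true
    · rw [if_pos hg, one_mul]
      have := le_abs_self (f1 v - f2 v); linarith
    · rw [if_neg hg, zero_mul]
      have := neg_abs_le (f1 v - f2 v); linarith
  calc ∑ v, (if g v then (1:ℝ) else 0) * (f1 v - f2 v)
      ≤ ∑ v, (|f1 v - f2 v| + (f1 v - f2 v)) / 2 := Finset.sum_le_sum fun v _ => hpt v
    _ = (∑ v, |f1 v - f2 v|) / 2 := by
        rw [← Finset.sum_div, Finset.sum_add_distrib, Finset.sum_sub_distrib, h1, h2]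
        ring

lemma l1_sq_le {N : Type*} [Fintype N] (f1 f2 : N → ℝ) (E : ℝ)
    (h1 : ∑ v, f1 v = 1) (h2 : ∑ v, f2 v = 1) (hnn : ∀ v, 0 ≤ f2 v)
    (hz : ∀ v, f2 v = 0 → f1 v = 0)
    (hratio : ∑ v, (f1 v) ^ 2 / f2 v ≤ E) :
    (∑ v, |f1 v - f2 v|) ^ 2 ≤ E - 1 := by
  have hCS := Finset.sum_mul_sq_le_sq_mul_sq Finset.univ
    (fun v => Real.sqrt ((f1 v - f2 v) ^ 2 / f2 v)) (fun v => Real.sqrt (f2 v))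
  have hab : ∀ v : N, Real.sqrt ((f1 v - f2 v) ^ 2 / f2 v) * Real.sqrt (f2 v)
      = |f1 v - f2 v| := by
    intro v
    rcases eq_or_lt_of_le (hnn v) with h0 | hpos
    · rw [← h0, hz v h0.symm]
      simp
    · rw [← Real.sqrt_mul (div_nonneg (sq_nonneg _) (hnn v)), div_mul_cancel₀ _ (ne_of_gt hpos),
        Real.sqrt_sq_eq_abs]
  have ha2 : ∀ v : N, Real.sqrt ((f1 v - f2 v) ^ 2 / f2 v) ^ 2 = (f1 v - f2 v) ^ 2 / f2 v :=
    fun v => Real.sq_sqrt (div_nonneg (sq_nonneg _) (hnn v))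
  have hb2 : ∀ v : N, Real.sqrt (f2 v) ^ 2 = f2 v := fun v => Real.sq_sqrt (hnn v)
  simp only [hab, ha2, hb2] at hCS
  rw [h2, mul_one] at hCS
  refine hCS.trans ?_
  have hpt : ∀ v : N, (f1 v - f2 v) ^ 2 / f2 v = (f1 v) ^ 2 / f2 v - 2 * f1 v + f2 v := by
    intro v
    rcases eq_or_lt_of_le (hnn v) with h0 | hpos
    · rw [← h0, hz v h0.symm]; simp
    · field_simp
      ring
  rw [Finset.sum_congr rfl fun v _ => hpt v]
  rw [Finset.sum_add_distrib, Finset.sum_sub_distrib, ← Finset.mul_sum, h1, h2]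
  linarith


set_option maxHeartbeats 1000000 in
lemma main_bound (T : Fin d → Finset (Fin m)) (g : (Fin d → Fin m → Bool) → Bool)
    {ρ δ : ℝ} (hρ0 : 0 ≤ ρ) (hρ1 : ρ ≤ 1) (hδ0 : 0 < δ) (hδ1 : δ ≤ 1/4)
    (hadv : 2/3 ≤ sssqYesP m d T ρ (1/2) g - sssqYesP m d T ρ (1/2 + δ) g) :
    1 ≤ 6 * δ ^ 2 * ρ * ∑ i, ((T i).card : ℝ) := by
  classical
  set f1 : (Fin d → Fin m → Bool) → ℝ := fun v => ∏ j, eH T ρ (1/2) j (fun i => v i j) with hf1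
  set f2 : (Fin d → Fin m → Bool) → ℝ := fun v => ∏ j, eH T ρ (1/2 + δ) j (fun i => v i j)
    with hf2
  have hp20 : (0:ℝ) < 1/2 + δ := by linarith
  have hp21 : (1:ℝ)/2 + δ < 1 := by linarith
  have h1sum : ∑ v, f1 v = 1 := by
    rw [hf1, sum_col]
    exact Finset.prod_eq_one fun j _ => sum_eH T ρ (1/2) j
  have h2sum : ∑ v, f2 v = 1 := by
    rw [hf2, sum_col]
    exact Finset.prod_eq_one fun j _ => sum_eH T ρ (1/2 + δ) j
  have hnn : ∀ v, 0 ≤ f2 v := fun v =>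
    Finset.prod_nonneg fun j _ => eH_nonneg T hρ0 hρ1 (by linarith) (by linarith) j _
  have hz : ∀ v, f2 v = 0 → f1 v = 0 := by
    intro v hv
    rw [hf2] at hv
    obtain ⟨j0, -, hj0⟩ := Finset.prod_eq_zero_iff.mp hv
    obtain ⟨hW0, hZ0⟩ := eH_eq_zero T hρ0 hρ1 hp20 hp21 j0 _ hj0
    refine Finset.prod_eq_zero (Finset.mem_univ j0) ?_
    rw [eH, hW0, hZ0]; ring
  -- advantage rewrite
  have hadv' : 2/3 ≤ ∑ v, (if g v then (1:ℝ) else 0) * (f1 v - f2 v) := by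
    rw [yesP_eq, yesP_eq, ← Finset.sum_sub_distrib] at hadv
    refine hadv.trans_eq (Finset.sum_congr rfl fun v _ => ?_)
    rw [mul_sub]
  -- ratio bound
  have hratio : ∑ v, (f1 v) ^ 2 / f2 v ≤
      Real.exp (6 * δ ^ 2 * ρ * ∑ i, ((T i).card : ℝ)) := by
    have hpt : ∀ v, (f1 v) ^ 2 / f2 v =
        ∏ j, (eH T ρ (1/2) j (fun i => v i j)) ^ 2 / eH T ρ (1/2 + δ) j (fun i => v i j) := by
      intro v
      by_cases hall : ∀ j, eH T ρ (1/2 + δ) j (fun i => v i j) ≠ 0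
      · rw [hf1, hf2, Finset.prod_div_distrib, ← Finset.prod_pow]
      · push_neg at hall
        obtain ⟨j0, hj0⟩ := hall
        have hv2 : f2 v = 0 := by
          rw [hf2]; exact Finset.prod_eq_zero (Finset.mem_univ j0) hj0
        rw [hv2, div_zero]
        obtain ⟨hW0, hZ0⟩ := eH_eq_zero T hρ0 hρ1 hp20 hp21 j0 _ hj0
        have h10 : eH T ρ (1/2) j0 (fun i => v i j0) = 0 := by rw [eH, hW0, hZ0]; ring
        symm
        refine Finset.prod_eq_zero (Finset.mem_univ j0) ?_
        rw [h10, hj0]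
        simp
    rw [Finset.sum_congr rfl fun v _ => hpt v]
    refine le_trans (le_of_eq (sum_col fun j u =>
      (eH T ρ (1/2) j u) ^ 2 / eH T ρ (1/2 + δ) j u)) ?_
    have hdouble : ∑ j : Fin m, ((Finset.univ.filter fun i => j ∈ T i).card : ℝ)
        = ∑ i, ((T i).card : ℝ) := by
      have hnat : ∑ j : Fin m, (Finset.univ.filter fun i => j ∈ T i).card
          = ∑ i, (T i).card := by
        simp_rw [Finset.card_filter]
        rw [Finset.sum_comm]
        refine Finset.sum_congr rfl fun i _ => ?_
        rw [← Finset.card_filter]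
        congr 1
        simp
      exact_mod_cast congrArg (Nat.cast (R := ℝ)) hnat
    rw [← hdouble, Finset.mul_sum, Real.exp_sum]
    refine Finset.prod_le_prod (fun j _ => Finset.sum_nonneg fun u _ =>
      div_nonneg (sq_nonneg _) (eH_nonneg T hρ0 hρ1 (by linarith) (by linarith) j u))
      fun j _ => ?_
    refine (chi_le T hρ0 hρ1 hδ0 hδ1 j).trans ?_
    have := Real.add_one_le_exp (6 * δ ^ 2 * (ρ * ((Finset.univ.filter fun i => j ∈ T i).card : ℝ)))
    refine (by linarith : (1:ℝ) + 6 * δ ^ 2 * (ρ * ((Finset.univ.filter fun i => j ∈ T i).card : ℝ))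
      ≤ Real.exp (6 * δ ^ 2 * (ρ * ((Finset.univ.filter fun i => j ∈ T i).card : ℝ)))).trans ?_
    apply le_of_eq
    congr 1
    ring
  -- combine
  have hl1 := l1_sq_le f1 f2 _ h1sum h2sum hnn hz hratio
  have habs : 4/3 ≤ ∑ v, |f1 v - f2 v| := by
    have := adv_le f1 f2 g h1sum h2sum
    linarith
  have habs2 : (4/3 : ℝ) ^ 2 ≤ (∑ v, |f1 v - f2 v|) ^ 2 := by
    refine pow_le_pow_left₀ (by norm_num) habs 2
  have hexp : Real.exp 1 < Real.exp (6 * δ ^ 2 * ρ * ∑ i, ((T i).card : ℝ)) := by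
    calc Real.exp 1 < 2.7182818286 := Real.exp_one_lt_d9
      _ < 25/9 := by norm_num
      _ ≤ Real.exp (6 * δ ^ 2 * ρ * ∑ i, ((T i).card : ℝ)) := by nlinarith
  exact le_of_lt (Real.exp_lt_exp.mp hexp)

end SSSQ


/-- The advantage of the SSSQ algorithm `(g, T)` with parameters `n`, `m`, `ε`:
the probability it answers "yes" under `A ∼ A_yes` (rate `1/2`) minus the probability
it answers "yes" under `A ∼ A_no` (rate `1/2 + (log₂ n)/√n`); response bits for
elements of `A` are `1` with probability `ε/√n`. -/
noncomputable def sssqAdv (n m d : ℕ) (T : Fin d → Finset (Fin m)) (ε : ℝ)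
    (g : (Fin d → Fin m → Bool) → Bool) : ℝ :=
  sssqYesP m d T (ε / Real.sqrt n) (1 / 2) g -
    sssqYesP m d T (ε / Real.sqrt n) (1 / 2 + Real.logb 2 n / Real.sqrt n) g

set_option maxHeartbeats 1000000 in
theorem stmt10 (α : ℝ) (hα₁ : 1 / 2 < α) (hα₂ : α < 1) :
    ∃ n₀ : ℕ, ∀ (n : ℕ) (ε : ℝ), n₀ ≤ n →
      (2 : ℝ) ^ (-((2 * α - 1) * (n : ℝ) / 2)) ≤ ε → ε ≤ 1 / 6 →
      ∀ m : ℕ, m = ⌈2 * (1 - α) * (n : ℝ) + (1 - α) * Real.sqrt n * Real.logb 2 n⌉₊ →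
      ∀ (d : ℕ) (T : Fin d → Finset (Fin m)) (g : (Fin d → Fin m → Bool) → Bool),
        2 / 3 ≤ sssqAdv n m d T ε g →
        (n : ℝ) ^ ((3 : ℝ) / 2) /
            (ε * (Real.logb 2 n) ^ 3 * (Real.logb 2 ((n : ℝ) / ε)) ^ 2) ≤
          ∑ i : Fin d, ((T i).card : ℝ) := by
  use 2 ^ 40
  intro n ε hn hεlow hεhigh m hm d T g hadv
  clear hm
  have hn' : ((2:ℝ)) ^ (40:ℕ) ≤ (n:ℝ) := by exact_mod_cast hn
  have hnpos : (0:ℝ) < n := lt_of_lt_of_le (by positivity) hn'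
  have hn1 : (1:ℝ) ≤ n := le_trans (by norm_num) hn'
  have hs0 : 0 < Real.sqrt n := Real.sqrt_pos.mpr hnpos
  have hs1 : 1 ≤ Real.sqrt n := by
    rw [← Real.sqrt_one]; exact Real.sqrt_le_sqrt hn1
  have hε0 : 0 < ε := lt_of_lt_of_le (Real.rpow_pos_of_pos two_pos _) hεlow
  have hL40 : 40 ≤ Real.logb 2 n := by
    have h240 : Real.logb 2 ((2:ℝ) ^ (40:ℕ)) = 40 := by
      rw [Real.logb_pow, Real.logb_self_eq_one one_lt_two]
      norm_num
    calc (40:ℝ) = Real.logb 2 ((2:ℝ) ^ (40:ℕ)) := h240.symm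
      _ ≤ Real.logb 2 n := (Real.logb_le_logb one_lt_two (by positivity) hnpos).mpr hn'
  have hL0 : 0 < Real.logb 2 n := by linarith
  set x : ℝ := (n:ℝ) ^ ((1:ℝ)/4) with hx
  have hx0 : 0 < x := Real.rpow_pos_of_pos hnpos _
  have hx1024 : 1024 ≤ x := by
    have h1 : ((2:ℝ) ^ (40:ℕ)) ^ ((1:ℝ)/4) ≤ x :=
      Real.rpow_le_rpow (by positivity) hn' (by norm_num)
    refine le_trans (le_of_eq ?_) h1
    rw [← Real.rpow_natCast 2 40, ← Real.rpow_mul (by norm_num)]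
    rw [show ((40:ℕ):ℝ) * ((1:ℝ)/4) = ((10:ℕ):ℝ) by norm_num, Real.rpow_natCast]
    norm_num
  have hsqx : Real.sqrt n = x * x := by
    rw [Real.sqrt_eq_rpow, hx, ← Real.rpow_add hnpos]; norm_num
  have hlogn : Real.log n ≤ 4 * x := by
    have h1 : Real.log n = 4 * Real.log x := by
      rw [hx, Real.log_rpow hnpos]; ring
    have h2 : Real.log x ≤ x - 1 := Real.log_le_sub_one_of_pos hx0
    linarith
  have hL : Real.logb 2 n ≤ Real.sqrt n / 4 := by
    have hlog2 : (0.6931471803:ℝ) < Real.log 2 := Real.log_two_gt_d9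
    have h1 : Real.logb 2 n ≤ (4*x) / 0.6931471803 := by
      rw [Real.logb]
      exact div_le_div₀ (by positivity) hlogn (by norm_num) hlog2.le
    have h2 : (4:ℝ)*x / 0.6931471803 ≤ 6*x := by
      rw [div_le_iff₀ (by norm_num)]
      nlinarith
    have h3 : (6:ℝ)*x ≤ x*x/4 := by nlinarith
    rw [hsqx]
    linarith
  set δ : ℝ := Real.logb 2 n / Real.sqrt n with hδ
  have hδ0 : 0 < δ := div_pos hL0 hs0
  have hδ1 : δ ≤ 1/4 := by
    rw [hδ, div_le_iff₀ hs0]; linarith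
  set ρ : ℝ := ε / Real.sqrt n with hρ
  have hρpos : 0 < ρ := div_pos hε0 hs0
  have hρ1 : ρ ≤ 1 := by
    rw [hρ, div_le_one hs0]; linarith
  have hkey := SSSQ.main_bound T g hρpos.le hρ1 hδ0 hδ1 hadv
  set Q : ℝ := ∑ i, ((T i).card : ℝ) with hQ
  have hQ0 : 0 ≤ Q := Finset.sum_nonneg fun i _ => by positivity
  set L := Real.logb 2 n with hLdef
  set M := Real.logb 2 ((n:ℝ)/ε) with hMdef
  have hM40 : 40 ≤ M := by
    refine le_trans hL40 ?_
    rw [hMdef]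
    refine (Real.logb_le_logb one_lt_two hnpos (by positivity)).mpr ?_
    rw [le_div_iff₀ hε0]
    nlinarith
  have h32 : (n:ℝ) ^ ((3:ℝ)/2) = (n:ℝ) * Real.sqrt n := by
    rw [show (3:ℝ)/2 = 1 + 1/2 by norm_num, Real.rpow_add hnpos, Real.rpow_one,
      ← Real.sqrt_eq_rpow]
  set s := Real.sqrt (n:ℝ) with hsdef
  have hns : (n:ℝ) = s * s := (Real.mul_self_sqrt hnpos.le).symm
  rw [h32, hns]
  have hsne : s ≠ 0 := ne_of_gt hs0
  have hεne : ε ≠ 0 := ne_of_gt hε0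
  have hLne : L ≠ 0 := ne_of_gt hL0
  have hMne : M ≠ 0 := by positivity
  have hpos6 : 0 < 6 * δ ^ 2 * ρ := by positivity
  refine le_of_mul_le_mul_left ?_ hpos6
  have hcoef : 6 * δ ^ 2 * ρ * ((s * s * s) / (ε * L ^ 3 * M ^ 2)) = 6 / (L * M ^ 2) := by
    rw [hδ, hρ]
    field_simp
  calc 6 * δ ^ 2 * ρ * ((s * s * s) / (ε * L ^ 3 * M ^ 2)) = 6 / (L * M ^ 2) := hcoef
    _ ≤ 1 := by
        rw [div_le_one (by positivity)]
        nlinarith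
    _ ≤ 6 * δ ^ 2 * ρ * Q := hkey
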